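/- Let w : ℤ → ℝ be supported in {-n, ..., 0} and let p(t) = Σ_{ν=0}^{n} t^ν · w(-ν). Suppose t = 1 is a root of p of order exactly m, i.e., p^(j)(1) = 0 for j = 0, ..., m-1 and c := p^(m)(1) ≠ 0. Then for every integer x ≥ 1, Σ_{k=x}^{x+n} k^m · w(x-k) = c. -/

import Mathlib

open Finset

lemma descFact_cast_id (ν j : ℕ) :
    (ν : ℝ) * (ν.descFactorial j : ℝ) =
      (ν.descFactorial (j+1) : ℝ) + (j : ℝ) * (ν.descFactorial j : ℝ) := by
  rcases le_or_gt j ν with h | h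
  · have : ν.descFactorial (j+1) = (ν - j) * ν.descFactorial j := Nat.descFactorial_succ ν j
    rw [this]
    push_cast [Nat.cast_sub h]
    ring
  · rw [Nat.descFactorial_eq_zero_iff_lt.2 h,
      Nat.descFactorial_eq_zero_iff_lt.2 (by omega)]
    ring

lemma key (n : ℕ) : ∀ (m : ℕ) (c : ℕ → ℝ),
    (∀ j < m, ∑ ν ∈ range (n+1), (ν.descFactorial j : ℝ) * c ν = 0) →
    ∀ x : ℝ, ∑ ν ∈ range (n+1), (x + ν)^m * c ν =
      ∑ ν ∈ range (n+1), (ν.descFactorial m : ℝ) * c ν := by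
  intro m
  induction m with
  | zero => intro c _ x; simp
  | succ m ih =>
    intro c hvan x
    have h1 : ∑ ν ∈ range (n+1), (x + ν)^m * c ν = 0 := by
      rw [ih c (fun j hj => hvan j (hj.trans (Nat.lt_succ_self m)))]
      exact hvan m (Nat.lt_succ_self m)
    have h2 : ∑ ν ∈ range (n+1), (x + ν)^m * ((ν : ℝ) * c ν) =
        ∑ ν ∈ range (n+1), (ν.descFactorial m : ℝ) * ((ν : ℝ) * c ν) := by
      refine ih _ (fun j hj => ?_) x
      have : ∑ ν ∈ range (n+1), (ν.descFactorial j : ℝ) * ((ν : ℝ) * c ν)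
          = ∑ ν ∈ range (n+1), ((ν.descFactorial (j+1) : ℝ) * c ν
            + (j : ℝ) * ((ν.descFactorial j : ℝ) * c ν)) := by
        refine Finset.sum_congr rfl fun ν _ => ?_
        linear_combination (c ν) * descFact_cast_id ν j
      rw [this, Finset.sum_add_distrib, ← Finset.mul_sum,
        hvan (j+1) (by omega), hvan j (by omega)]
      ring
    have expand : ∑ ν ∈ range (n+1), (x + ν)^(m+1) * c ν =
        x * (∑ ν ∈ range (n+1), (x + ν)^m * c ν)
          + ∑ ν ∈ range (n+1), (x + ν)^m * ((ν : ℝ) * c ν) := by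
      rw [Finset.mul_sum, ← Finset.sum_add_distrib]
      refine Finset.sum_congr rfl fun ν _ => by ring
    rw [expand, h1, h2, mul_zero, zero_add]
    have step : ∑ ν ∈ range (n+1), (ν.descFactorial m : ℝ) * ((ν : ℝ) * c ν)
        = ∑ ν ∈ range (n+1), ((ν.descFactorial (m+1) : ℝ) * c ν
          + (m : ℝ) * ((ν.descFactorial m : ℝ) * c ν)) := by
      refine Finset.sum_congr rfl fun ν _ => ?_
      linear_combination (c ν) * descFact_cast_id ν m
    rw [step, Finset.sum_add_distrib, ← Finset.mul_sum, hvan m (Nat.lt_succ_self m)]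
    ring

lemma iter_deriv_sum (n : ℕ) (c : ℕ → ℝ) (j : ℕ) :
    deriv^[j] (fun t : ℝ => ∑ ν ∈ range (n+1), t ^ ν * c ν) =
      fun t : ℝ => ∑ ν ∈ range (n+1), (ν.descFactorial j : ℝ) * (t ^ (ν - j) * c ν) := by
  induction j with
  | zero => simp
  | succ j ih =>
    rw [Function.iterate_succ_apply', ih]
    funext t
    rw [deriv_fun_sum (fun ν _ => by
      exact (((differentiable_pow _).differentiableAt).mul_const _).const_mul _)]
    refine Finset.sum_congr rfl fun ν _ => ?_
    rw [deriv_const_mul _ (((differentiable_pow _).differentiableAt).mul_const _),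
      deriv_mul_const ((differentiable_pow _).differentiableAt), deriv_pow_field]
    have : (ν.descFactorial j : ℝ) * ((ν - j : ℕ) : ℝ) = (ν.descFactorial (j+1) : ℝ) := by
      rw [Nat.descFactorial_succ]; push_cast; ring
    have h2 : ν - j - 1 = ν - (j+1) := by omega
    rw [← h2]; linear_combination (t ^ (ν - j - 1) * c ν) * this

/-- If the accompanying polynomial of `w` (supported in `{-n,…,0}`) has a root of order
exactly `m` at `t = 1` with `c = p^(m)(1) ≠ 0`, then
`∑_{k=x}^{x+n} k^m w(x-k) = c` for every integer `x ≥ 1`. -/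
theorem stmt_1 (n m : ℕ) (w : ℤ → ℝ)
    (hsupp : ∀ x : ℤ, w x ≠ 0 → -(n : ℤ) ≤ x ∧ x ≤ 0)
    (p : ℝ → ℝ)
    (hp : p = fun t : ℝ => ∑ ν ∈ Finset.range (n + 1), t ^ ν * w (-(ν : ℤ)))
    (hroot : ∀ j : ℕ, j < m → iteratedDeriv j p 1 = 0)
    (hc : iteratedDeriv m p 1 ≠ 0) :
    ∀ x : ℤ, 1 ≤ x →
      ∑ k ∈ Finset.Icc x (x + (n : ℤ)), (k : ℝ) ^ m * w (x - k) = iteratedDeriv m p 1 := by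
  have hid : ∀ j : ℕ, iteratedDeriv j p 1 =
      ∑ ν ∈ range (n+1), (ν.descFactorial j : ℝ) * w (-(ν : ℤ)) := by
    intro j
    rw [iteratedDeriv_eq_iterate, hp, iter_deriv_sum]
    exact Finset.sum_congr rfl fun ν _ => by rw [one_pow, one_mul]
  intro x hx
  have reindex : ∑ k ∈ Finset.Icc x (x + (n : ℤ)), (k : ℝ) ^ m * w (x - k) =
      ∑ ν ∈ range (n+1), ((x : ℝ) + ν) ^ m * w (-(ν : ℤ)) := by
    refine Finset.sum_nbij' (fun k => (k - x).toNat) (fun ν => x + ν) ?_ ?_ ?_ ?_ ?_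
    · intro k hk; simp only [Finset.mem_Icc] at hk; simp only [Finset.mem_range]; omega
    · intro ν hν; simp only [Finset.mem_range] at hν; simp only [Finset.mem_Icc]; omega
    · intro k hk; simp only [Finset.mem_Icc] at hk; omega
    · intro ν hν; simp only [Finset.mem_range] at hν; omega
    · intro k hk
      simp only [Finset.mem_Icc] at hk
      have h2 : x + ((k - x).toNat : ℤ) = k := by omega
      have h3 : -(((k - x).toNat : ℕ) : ℤ) = x - k := by omega
      have h4 : (x : ℝ) + (((k - x).toNat : ℕ) : ℝ) = (k : ℝ) := by exact_mod_cast congrArg (Int.cast : ℤ → ℝ) h2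
      rw [h3, h4]
  rw [reindex, hid m]
  exact key n m (fun ν => w (-(ν : ℤ))) (fun j hj => by rw [← hid j]; exact hroot j hj) x
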